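/- Let H be a graph (loops allowed). There exists a full lc-sequence for H if and only if every connected component of H containing no looped vertex consists of a single isolated vertex. -/

import Mathlib

open Matrix

variable {V : Type*} [Fintype V] [DecidableEq V]

/-- The adjacency relation of a graph given by its GF(2) adjacency matrix. -/
def adjRel {W : Type*} (B : Matrix W W (ZMod 2)) (u w : W) : Prop :=
  u ≠ w ∧ B u w = 1

/-- The adjacency matrix of `H *_c v`: complement the induced subgraph on the
closed neighborhood of the looped vertex `v` (including loop statuses of the
neighbors of `v`) and remove all edges incident to `v`, including its loop. -/
def lccMat (A : Matrix V V (ZMod 2)) (v : V) : Matrix V V (ZMod 2) :=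
  fun x y => if x = v ∨ y = v then 0 else A x y + A x v * A v y

/-- Applicability of a sequence of `*_c` operations: each vertex is looped in the
current graph. -/
def IsLcSeq (A : Matrix V V (ZMod 2)) : List V → Prop
  | [] => True
  | v :: rest => A v v = 1 ∧ IsLcSeq (lccMat A v) rest

/-! ### Auxiliary lemmas -/

private lemma z2_ne (a : ZMod 2) (h : a ≠ 0) : a = 1 := by revert h; revert a; decide

private lemma z2_cases (a : ZMod 2) : a = 0 ∨ a = 1 := by revert a; decide

private lemma z2_mul_self (a : ZMod 2) : a * a = a := by revert a; decide

private lemma z2_add_eq_zero {a b : ZMod 2} (h : a + b = 0) : a = b := by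
  revert h; revert a b; decide

private lemma z2_add_eq_one {a b : ZMod 2} (h : a + b = 1) : a = 1 + b := by
  revert h; revert a b; decide

private lemma z2_zero_ne_one : (0 : ZMod 2) ≠ 1 := by decide

/-- Row `v` of `lccMat A v` vanishes. -/
private lemma lccMat_row (A : Matrix V V (ZMod 2)) (v y : V) : lccMat A v v y = 0 := by
  simp [lccMat]

/-- Column `v` of `lccMat A v` vanishes. -/
private lemma lccMat_col (A : Matrix V V (ZMod 2)) (v x : V) : lccMat A v x v = 0 := by
  simp [lccMat]

private lemma lccMat_apply (A : Matrix V V (ZMod 2)) {v x y : V} (hx : x ≠ v) (hy : y ≠ v) :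
    lccMat A v x y = A x y + A x v * A v y := by
  simp [lccMat, hx, hy]

private lemma lccMat_isSymm {A : Matrix V V (ZMod 2)} (hA : A.IsSymm) (v : V) :
    (lccMat A v).IsSymm := by
  ext x y
  simp only [transpose_apply, lccMat, or_comm (a := y = v)]
  split
  · rfl
  · rw [hA.apply, hA.apply x v, hA.apply v y, mul_comm]

/-- The key property: every vertex incident to an edge (or loop) can reach a looped vertex. -/
def QProp (A : Matrix V V (ZMod 2)) : Prop :=
  ∀ x y, A x y = 1 → ∃ w, Relation.ReflTransGen (adjRel A) x w ∧ A w w = 1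

/-! ### Forward direction -/

private lemma fwd_invariant (A : Matrix V V (ZMod 2)) (x : V)
    (hnl : ∀ z, Relation.ReflTransGen (adjRel A) x z → A z z = 0) :
    ∀ (σ : List V) (B : Matrix V V (ZMod 2)), IsLcSeq B σ →
      (∀ z, Relation.ReflTransGen (adjRel A) x z → ∀ y, B z y = A z y) →
      ∀ z, Relation.ReflTransGen (adjRel A) x z → ∀ y, σ.foldl lccMat B z y = A z y := by
  intro σ
  induction σ with
  | nil => intro B _ hB z hz y; exact hB z hz y
  | cons v rest ih =>
    intro B hseq hB z hz y
    obtain ⟨hv, hrest⟩ := hseq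
    have hvnot : ¬ Relation.ReflTransGen (adjRel A) x v := by
      intro h
      have h1 : B v v = A v v := hB v h v
      rw [hv, hnl v h] at h1
      exact z2_zero_ne_one h1.symm
    have hzv : ∀ w, Relation.ReflTransGen (adjRel A) x w → A w v = 0 := by
      intro w hw
      by_contra hne
      have h1 : A w v = 1 := z2_ne _ hne
      have hwv : w ≠ v := by rintro rfl; exact hvnot hw
      exact hvnot (hw.tail ⟨hwv, h1⟩)
    have hB' : ∀ w, Relation.ReflTransGen (adjRel A) x w → ∀ y', lccMat B v w y' = A w y' := by
      intro w hw y'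
      have hwv : w ≠ v := by rintro rfl; exact hvnot hw
      have hBwv : B w v = 0 := by rw [hB w hw v, hzv w hw]
      by_cases hyv : y' = v
      · subst hyv; rw [lccMat_col, hzv w hw]
      · rw [lccMat_apply B hwv hyv, hBwv, zero_mul, add_zero, hB w hw]
    simpa using ih (lccMat B v) hrest hB' z hz y

private lemma exists_to_Q {A : Matrix V V (ZMod 2)}
    (hex : ∃ σ : List V, σ.Nodup ∧ IsLcSeq A σ ∧ σ.foldl lccMat A = 0) : QProp A := by
  obtain ⟨σ, _, hseq, hzero⟩ := hex
  intro x y hxy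
  by_contra hno
  push_neg at hno
  have hnl : ∀ z, Relation.ReflTransGen (adjRel A) x z → A z z = 0 := by
    intro z hz
    rcases z2_cases (A z z) with h | h
    · exact h
    · exact absurd h (hno z hz)
  have h0 : σ.foldl lccMat A x y = A x y :=
    fwd_invariant A x hnl σ A hseq (fun _ _ _ => rfl) x Relation.ReflTransGen.refl y
  rw [hzero] at h0
  rw [hxy] at h0
  exact z2_zero_ne_one h0

/-! ### The safe-pivot lemma -/

/-- Loopless neighbors of `w`. -/
private def Lset (A : Matrix V V (ZMod 2)) (w : V) : Finset V :=
  Finset.univ.filter (fun y => A w y = 1 ∧ A y y = 0)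

/-- Looped neighbors of `w`. -/
private def Kset (A : Matrix V V (ZMod 2)) (w : V) : Finset V :=
  Finset.univ.filter (fun y => y ≠ w ∧ A w y = 1 ∧ A y y = 1)

private lemma mem_Lset {A : Matrix V V (ZMod 2)} {w y : V} :
    y ∈ Lset A w ↔ A w y = 1 ∧ A y y = 0 := by simp [Lset]

private lemma mem_Kset {A : Matrix V V (ZMod 2)} {w y : V} :
    y ∈ Kset A w ↔ y ≠ w ∧ A w y = 1 ∧ A y y = 1 := by simp [Kset]

private lemma safe_pivot {A : Matrix V V (ZMod 2)} (hA : A.IsSymm) (hQ : QProp A) (v : V)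
    (hv : A v v = 1)
    (hmax : ∀ u, A u u = 1 → (Lset A u).card ≤ (Lset A v).card)
    (hmin : ∀ u, A u u = 1 → (Lset A u).card = (Lset A v).card →
      (Kset A v).card ≤ (Kset A u).card) :
    QProp (lccMat A v) := by
  set A' := lccMat A v with hA'def
  have hA' : A'.IsSymm := lccMat_isSymm hA v
  intro x₀ y₀ hxy
  by_contra hno
  push_neg at hno
  -- the reachability set of x₀ in A' is loopless
  have hloopless : ∀ z, Relation.ReflTransGen (adjRel A') x₀ z → A' z z = 0 := by
    intro z hz
    rcases z2_cases (A' z z) with h | h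
    · exact h
    · exact absurd h (hno z hz)
  -- basic facts
  have hx₀v : x₀ ≠ v := by
    rintro rfl
    rw [hA'def, lccMat_row] at hxy
    exact z2_zero_ne_one hxy
  have hnev : ∀ z, Relation.ReflTransGen (adjRel A') x₀ z → z ≠ v := by
    intro z hz
    induction hz with
    | refl => exact hx₀v
    | tail _ step _ =>
      rintro rfl
      have := step.2
      rw [hA'def, lccMat_col] at this
      exact z2_zero_ne_one this
  have hx₀y₀ : x₀ ≠ y₀ := by
    rintro rfl
    rw [hloopless x₀ Relation.ReflTransGen.refl] at hxy
    exact z2_zero_ne_one hxy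
  have hy₀ : Relation.ReflTransGen (adjRel A') x₀ y₀ :=
    Relation.ReflTransGen.single ⟨hx₀y₀, hxy⟩
  -- closedness of the reachability set
  have hclosed : ∀ z, Relation.ReflTransGen (adjRel A') x₀ z →
      ∀ y, ¬ Relation.ReflTransGen (adjRel A') x₀ y → A' z y = 0 := by
    intro z hz y hy
    by_contra hne
    have h1 : A' z y = 1 := z2_ne _ hne
    have hzy : z ≠ y := by rintro rfl; exact hy hz
    exact hy (hz.tail ⟨hzy, h1⟩)
  -- loop relation inside the reachability set
  have hF4 : ∀ z, Relation.ReflTransGen (adjRel A') x₀ z → A z z = A z v := by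
    intro z hz
    have hzv : z ≠ v := hnev z hz
    have h0 : A' z z = 0 := hloopless z hz
    rw [hA'def, lccMat_apply A hzv hzv, hA.apply z v, z2_mul_self] at h0
    exact z2_add_eq_zero h0
  -- there is a vertex in the reachability set adjacent (in A) to v
  have hF5 : ∃ u, Relation.ReflTransGen (adjRel A') x₀ u ∧ A u v = 1 := by
    by_contra hnu
    push_neg at hnu
    have hzero : ∀ z, Relation.ReflTransGen (adjRel A') x₀ z → A z v = 0 := by
      intro z hz
      rcases z2_cases (A z v) with h | h
      · exact h
      · exact absurd h (hnu z hz)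
    have hAzy : ∀ z, Relation.ReflTransGen (adjRel A') x₀ z →
        ∀ y, ¬ Relation.ReflTransGen (adjRel A') x₀ y → A z y = 0 := by
      intro z hz y hy
      by_cases hyv : y = v
      · subst hyv; exact hzero z hz
      · have h0 : A' z y = 0 := hclosed z hz y hy
        rw [hA'def, lccMat_apply A (hnev z hz) hyv, hzero z hz, zero_mul, add_zero] at h0
        exact h0
    have hsub : ∀ w, Relation.ReflTransGen (adjRel A) x₀ w →
        Relation.ReflTransGen (adjRel A') x₀ w := by
      intro w hw
      induction hw with
      | refl => exact Relation.ReflTransGen.refl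
      | tail hb step ih =>
        by_contra hc
        have := hAzy _ ih _ hc
        rw [step.2] at this
        exact z2_zero_ne_one this.symm
    have hx₀y₀A : A x₀ y₀ = 1 := by
      have hy₀v : y₀ ≠ v := hnev y₀ hy₀
      have : A' x₀ y₀ = A x₀ y₀ + A x₀ v * A v y₀ := lccMat_apply A hx₀v hy₀v
      rw [hxy, hzero x₀ Relation.ReflTransGen.refl, zero_mul, add_zero] at this
      exact this.symm
    obtain ⟨w, hw, hww⟩ := hQ x₀ y₀ hx₀y₀A
    have hw' : Relation.ReflTransGen (adjRel A') x₀ w := hsub w hw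
    rw [hF4 w hw', hzero w hw'] at hww
    exact z2_zero_ne_one hww
  obtain ⟨u, hu, huv⟩ := hF5
  have huuloop : A u u = 1 := by rw [hF4 u hu]; exact huv
  have hunev : u ≠ v := hnev u hu
  -- rows of u and v agree outside the reachability set
  have hF7 : ∀ y, ¬ Relation.ReflTransGen (adjRel A') x₀ y → y ≠ v → A u y = A v y := by
    intro y hy hyv
    have h0 : A' u y = 0 := hclosed u hu y hy
    rw [hA'def, lccMat_apply A hunev hyv, huv, one_mul] at h0
    exact z2_add_eq_zero h0
  -- the loopless neighborhood of v is contained in that of u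
  have hF8 : Lset A v ⊆ Lset A u := by
    intro y hy
    rw [mem_Lset] at hy
    obtain ⟨hvy, hyy⟩ := hy
    have hynot : ¬ Relation.ReflTransGen (adjRel A') x₀ y := by
      intro hyC
      rw [hF4 y hyC, hA.apply, hvy] at hyy
      exact z2_zero_ne_one hyy.symm
    have hyv : y ≠ v := by rintro rfl; rw [hv] at hyy; exact z2_zero_ne_one hyy.symm
    rw [mem_Lset]
    exact ⟨by rw [hF7 y hynot hyv]; exact hvy, hyy⟩
  -- u has a neighbor t in the reachability set
  have hF3 : ∃ t, Relation.ReflTransGen (adjRel A') x₀ t ∧ t ≠ u ∧ A' u t = 1 := by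
    by_cases hux : u = x₀
    · subst hux
      exact ⟨y₀, hy₀, fun h => hx₀y₀ h.symm, hxy⟩
    · rcases (Relation.ReflTransGen.cases_tail hu) with h | ⟨c, hc, step⟩
      · exact absurd h hux
      · refine ⟨c, hc, fun h => step.1 h, ?_⟩
        rw [hA'.apply]; exact step.2
  obtain ⟨t, htC, htu, hut'⟩ := hF3
  have htv : t ≠ v := hnev t htC
  have hutA : A u t + A v t = 1 := by
    rw [hA'def, lccMat_apply A hunev htv, huv, one_mul] at hut'
    exact hut'
  rcases z2_cases (A v t) with hvt | hvt
  · -- case (a): t is a loopless neighbor of u but not of v : contradicts maximality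
    have hutA1 : A u t = 1 := by rw [hvt, add_zero] at hutA; exact hutA
    have htt : A t t = 0 := by rw [hF4 t htC, hA.apply]; exact hvt
    have htLu : t ∈ Lset A u := mem_Lset.mpr ⟨hutA1, htt⟩
    have htLv : t ∉ Lset A v := by
      rw [mem_Lset]; rintro ⟨h1, _⟩; rw [hvt] at h1; exact z2_zero_ne_one h1
    have hss : Lset A v ⊂ Lset A u := by
      rw [Finset.ssubset_iff_of_subset hF8]
      exact ⟨t, htLu, htLv⟩
    have := Finset.card_lt_card hss
    have := hmax u huuloop
    omega
  · -- case (b): t and u witness that v has strictly more looped neighbors than u,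
    -- while u has at least as many loopless neighbors : contradicts minimality
    have hutA0 : A u t = 0 := by
      have := z2_add_eq_one hutA
      rw [hvt] at this
      exact this.trans (by decide)
    have htt : A t t = 1 := by rw [hF4 t htC, hA.apply]; exact hvt
    have htKv : t ∈ Kset A v := mem_Kset.mpr ⟨htv, hvt, htt⟩
    have huKv : u ∈ Kset A v := mem_Kset.mpr ⟨hunev, by rw [hA.apply]; exact huv, huuloop⟩
    have h9 : Kset A u ⊆ insert v (((Kset A v).erase u).erase t) := by
      intro y hy
      rw [mem_Kset] at hy
      obtain ⟨hyu, huy, hyy⟩ := hy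
      have hyt : y ≠ t := by rintro rfl; rw [hutA0] at huy; exact z2_zero_ne_one huy
      by_cases hyv : y = v
      · subst hyv; exact Finset.mem_insert_self _ _
      · have hvy : A v y = 1 := by
          by_cases hyC : Relation.ReflTransGen (adjRel A') x₀ y
          · have := hF4 y hyC
            rw [hyy] at this
            exact (hA.apply y v).trans this.symm
          · rw [← hF7 y hyC hyv]; exact huy
        refine Finset.mem_insert_of_mem ?_
        rw [Finset.mem_erase, Finset.mem_erase, mem_Kset]
        exact ⟨hyt, hyu, hyv, hvy, hyy⟩
    have hcard1 : ((Kset A v).erase u).card = (Kset A v).card - 1 :=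
      Finset.card_erase_of_mem huKv
    have htKv' : t ∈ (Kset A v).erase u := Finset.mem_erase.mpr ⟨htu, htKv⟩
    have hcard2 : (((Kset A v).erase u).erase t).card = ((Kset A v).erase u).card - 1 :=
      Finset.card_erase_of_mem htKv'
    have hKvpos : 1 ≤ ((Kset A v).erase u).card := Finset.card_pos.mpr ⟨t, htKv'⟩
    have hKvpos2 : 1 ≤ (Kset A v).card := Finset.card_pos.mpr ⟨u, huKv⟩
    have hcard3 : (Kset A u).card ≤ (((Kset A v).erase u).erase t).card + 1 :=
      le_trans (Finset.card_le_card h9) (Finset.card_insert_le _ _)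
    have hKlt : (Kset A u).card < (Kset A v).card := by omega
    have hLle : (Lset A v).card ≤ (Lset A u).card := Finset.card_le_card hF8
    have hLge : (Lset A u).card ≤ (Lset A v).card := hmax u huuloop
    have := hmin u huuloop (le_antisymm hLge hLle)
    omega

/-! ### Backward direction : construction of a full sequence -/

open Classical in
private noncomputable def supp (A : Matrix V V (ZMod 2)) : Finset V :=
  Finset.univ.filter (fun x => ∃ y, A x y ≠ 0)

private lemma back (n : ℕ) : ∀ (A : Matrix V V (ZMod 2)), A.IsSymm → QProp A →
    (supp A).card ≤ n →
    ∃ σ : List V, σ.Nodup ∧ IsLcSeq A σ ∧ σ.foldl lccMat A = 0 ∧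
      ∀ x ∈ σ, x ∈ supp A := by
  induction n with
  | zero =>
    intro A _ _ hcard
    have hA0 : A = 0 := by
      ext x y
      by_contra hne
      have : x ∈ supp A := by simp [supp]; exact ⟨y, hne⟩
      have : 0 < (supp A).card := Finset.card_pos.mpr ⟨x, this⟩
      omega
    exact ⟨[], List.nodup_nil, trivial, by simpa using hA0, by simp⟩
  | succ n ih =>
    intro A hA hQ hcard
    by_cases hA0 : A = 0
    · exact ⟨[], List.nodup_nil, trivial, by simpa using hA0, by simp⟩
    · -- find an entry equal to 1
      have hex : ∃ x y, A x y = 1 := by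
        by_contra h
        push_neg at h
        apply hA0
        ext x y
        rcases z2_cases (A x y) with h' | h'
        · exact h'
        · exact absurd h' (h x y)
      obtain ⟨x, y, hxy⟩ := hex
      obtain ⟨w₀, _, hw₀⟩ := hQ x y hxy
      -- choose a safe pivot
      have hTne : (Finset.univ.filter (fun w => A w w = 1)).Nonempty :=
        ⟨w₀, by simp [hw₀]⟩
      obtain ⟨v₁, hv₁T, hv₁max⟩ :=
        Finset.exists_max_image (Finset.univ.filter (fun w => A w w = 1))
          (fun w => (Lset A w).card) hTne
      have hv₁loop : A v₁ v₁ = 1 := by simpa using hv₁T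
      set T' := (Finset.univ.filter (fun w => A w w = 1)).filter
        (fun w => (Lset A w).card = (Lset A v₁).card) with hT'
      have hv₁T' : v₁ ∈ T' := by simp [hT', hv₁loop]
      obtain ⟨v, hvT', hvmin⟩ :=
        Finset.exists_min_image T' (fun w => (Kset A w).card) ⟨v₁, hv₁T'⟩
      have hvloop : A v v = 1 := by
        have := hvT'; rw [hT'] at this; simp at this; exact this.1
      have hvL : (Lset A v).card = (Lset A v₁).card := by
        have := hvT'; rw [hT'] at this; simp at this; exact this.2
      have hmax : ∀ u, A u u = 1 → (Lset A u).card ≤ (Lset A v).card := by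
        intro u hu
        rw [hvL]
        exact hv₁max u (by simp [hu])
      have hmin : ∀ u, A u u = 1 → (Lset A u).card = (Lset A v).card →
          (Kset A v).card ≤ (Kset A u).card := by
        intro u hu hLu
        exact hvmin u (by simp [hT', hu]; omega)
      -- pivot at v
      have hQ' : QProp (lccMat A v) := safe_pivot hA hQ v hvloop hmax hmin
      have hA'symm : (lccMat A v).IsSymm := lccMat_isSymm hA v
      have hsub : supp (lccMat A v) ⊆ (supp A).erase v := by
        intro z hz
        simp only [supp, Finset.mem_filter, Finset.mem_univ, true_and] at hz
        obtain ⟨y', hy'⟩ := hz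
        have hzv : z ≠ v := by
          intro h; exact hy' (by rw [h]; exact lccMat_row A v y')
        have hy'v : y' ≠ v := by
          intro h; exact hy' (by rw [h]; exact lccMat_col A v z)
        rw [Finset.mem_erase]
        refine ⟨hzv, ?_⟩
        simp only [supp, Finset.mem_filter, Finset.mem_univ, true_and]
        by_contra h
        push_neg at h
        apply hy'
        rw [lccMat_apply A hzv hy'v, h y', h v, zero_mul, add_zero]
      have hvsupp : v ∈ supp A := by
        simp only [supp, Finset.mem_filter, Finset.mem_univ, true_and]
        exact ⟨v, by rw [hvloop]; exact one_ne_zero⟩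
      have hcard' : (supp (lccMat A v)).card ≤ n := by
        have h1 := Finset.card_le_card hsub
        have h2 : ((supp A).erase v).card = (supp A).card - 1 :=
          Finset.card_erase_of_mem hvsupp
        have h3 : 1 ≤ (supp A).card := Finset.card_pos.mpr ⟨v, hvsupp⟩
        omega
      obtain ⟨σ', hnd, hseq, hzero, hmem⟩ := ih (lccMat A v) hA'symm hQ' hcard'
      refine ⟨v :: σ', ?_, ⟨hvloop, hseq⟩, by simpa using hzero, ?_⟩
      · rw [List.nodup_cons]
        refine ⟨fun hvin => ?_, hnd⟩
        have := hsub (hmem v hvin)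
        rw [Finset.mem_erase] at this
        exact this.1 rfl
      · intro z hz
        rcases List.mem_cons.mp hz with rfl | hz'
        · exact hvsupp
        · exact Finset.mem_of_mem_erase (hsub (hmem z hz'))

/-- Hannenhalli–Pevzner-type theorem for graphs: a graph `H` (loops allowed) admits
a full lc-sequence (a sequence of applicable `*_c` operations at mutually distinct
vertices resulting in a graph with only isolated vertices) if and only if every
connected component of `H` containing no looped vertex consists of a single
isolated vertex. -/
theorem exists_full_lcSeq_iff (A : Matrix V V (ZMod 2)) (hA : A.IsSymm) :
    (∃ σ : List V, σ.Nodup ∧ IsLcSeq A σ ∧ σ.foldl lccMat A = 0) ↔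
    (∀ (C : Set V) (w₀ : V), C = {y | Relation.ReflTransGen (adjRel A) w₀ y} →
      (∀ x ∈ C, A x x = 0) → ∃ u, C = {u} ∧ ∀ y, A u y = 0) := by
  constructor
  · intro hex C w₀ hC hloopless
    have hQ := exists_to_Q hex
    have hw₀C : w₀ ∈ C := by rw [hC]; exact Relation.ReflTransGen.refl
    have hrow : ∀ z ∈ C, ∀ y, A z y = 0 := by
      intro z hz yy
      by_contra hne
      have h1 : A z yy = 1 := z2_ne _ hne
      obtain ⟨w, hw, hww⟩ := hQ z yy h1
      have hzreach : Relation.ReflTransGen (adjRel A) w₀ z := by rw [hC] at hz; exact hz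
      have hwC : w ∈ C := by rw [hC]; exact hzreach.trans hw
      rw [hloopless w hwC] at hww
      exact z2_zero_ne_one hww
    refine ⟨w₀, ?_, fun y => hrow w₀ hw₀C y⟩
    ext z
    simp only [Set.mem_singleton_iff]
    constructor
    · intro hz
      rw [hC] at hz
      induction hz with
      | refl => rfl
      | @tail b c hb step ih =>
        exfalso
        have hbC : b ∈ C := by rw [hC]; exact hb
        have := hrow b hbC c
        rw [step.2] at this
        exact z2_zero_ne_one this.symm
    · rintro rfl; exact hw₀C
  · intro hrhs
    have hQ : QProp A := by
      intro x y hxy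
      by_contra hno
      push_neg at hno
      have hloopless : ∀ z ∈ {y | Relation.ReflTransGen (adjRel A) x y}, A z z = 0 := by
        intro z hz
        rcases z2_cases (A z z) with h | h
        · exact h
        · exact absurd h (hno z hz)
      obtain ⟨u, hCu, hu0⟩ := hrhs {y | Relation.ReflTransGen (adjRel A) x y} x rfl hloopless
      have hxC : x ∈ ({u} : Set V) := by
        rw [← hCu]; exact Relation.ReflTransGen.refl
      rw [Set.mem_singleton_iff] at hxC
      subst hxC
      rw [hu0 y] at hxy
      exact z2_zero_ne_one hxy
    obtain ⟨σ, hnd, hseq, hzero, _⟩ := back (supp A).card A hA hQ le_rfl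
    exact ⟨σ, hnd, hseq, hzero⟩
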